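/- Let D ⊆ ℝ² be a compact set, f : [0,1] × [0,1] → D continuous, γ : [0,t₀] → D continuous with γ(t') ∉ f([0,1] × {t'}) for all t' ∈ [0,t₀], and let β : [0,1] → D \ f([0,1] × {t₀}) be a continuous path with β(0) = γ(t₀). Then there exists a continuous path γ̃ : [0,t₀] → D with γ̃(t₀) = β(1) and γ̃(t') ∉ f([0,1] × {t'}) for all t' ∈ [0,t₀]. -/

import Mathlib

open Set

/-- Gluing lemma: a two-piece `if _ ≤ a` function is continuous on `s` if both
pieces are continuous on `s` and agree at `a`. -/
lemma stmt9_if_le {f g : ℝ → ℂ} {s : Set ℝ} {a : ℝ}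
    (hf : ContinuousOn f s) (hg : ContinuousOn g s) (heq : f a = g a) :
    ContinuousOn (fun x => if x ≤ a then f x else g x) s := by
  apply ContinuousOn.if
  · intro x hx
    have hfr : x ∈ frontier (Iic a) := by
      simpa [Set.Iic] using hx.2
    rw [frontier_Iic] at hfr
    simp only [mem_singleton_iff] at hfr
    subst hfr; exact heq
  · exact hf.mono inter_subset_left
  · exact hg.mono inter_subset_left

/-- A continuous positive function on a nonempty compact set has a positive lower bound. -/
lemma stmt9_pos_min {s : Set (ℝ × ℝ)} (hs : IsCompact s) (hne : s.Nonempty)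
    {h : ℝ × ℝ → ℝ} (hc : ContinuousOn h s) (hpos : ∀ p ∈ s, 0 < h p) :
    ∃ ε > 0, ∀ p ∈ s, ε ≤ h p := by
  obtain ⟨p, hp, hmin⟩ := hs.exists_isMinOn hne hc
  exact ⟨h p, hpos p hp, fun q hq => hmin hq⟩

/-- If an intruder `γ` evades the sensor curve `f` up to time `t₀`, and
`β` is a path from `γ t₀` avoiding the sensor image at time `t₀`, then there
is an evasion path up to time `t₀` ending at `β 1`. -/
theorem stmt9 (D : Set ℂ) (hD : IsCompact D) (f : ℝ → ℝ → ℂ)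
    (hf : ContinuousOn (fun q : ℝ × ℝ => f q.1 q.2) (Icc 0 1 ×ˢ Icc 0 1))
    (hfD : ∀ s ∈ Icc (0:ℝ) 1, ∀ t ∈ Icc (0:ℝ) 1, f s t ∈ D)
    (t₀ : ℝ) (ht₀ : t₀ ∈ Icc (0:ℝ) 1)
    (γ : ℝ → ℂ) (hγ : ContinuousOn γ (Icc 0 t₀)) (hγD : ∀ t' ∈ Icc 0 t₀, γ t' ∈ D)
    (hev : ∀ t' ∈ Icc 0 t₀, γ t' ∉ (fun s => f s t') '' Icc 0 1)
    (β : ℝ → ℂ) (hβ : ContinuousOn β (Icc 0 1))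
    (hβD : ∀ r ∈ Icc (0:ℝ) 1, β r ∈ D \ (fun s => f s t₀) '' Icc 0 1)
    (hβ0 : β 0 = γ t₀) :
    ∃ γ' : ℝ → ℂ, ContinuousOn γ' (Icc 0 t₀) ∧ (∀ t' ∈ Icc 0 t₀, γ' t' ∈ D) ∧
      γ' t₀ = β 1 ∧ ∀ t' ∈ Icc 0 t₀, γ' t' ∉ (fun s => f s t') '' Icc 0 1 := by
  obtain ⟨ht₀0, ht₀1⟩ := ht₀
  rcases eq_or_lt_of_le ht₀0 with h0 | h0
  · -- degenerate case t₀ = 0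
    refine ⟨fun _ => β 1, continuousOn_const, ?_, rfl, ?_⟩
    · intro t' _; exact (hβD 1 (by norm_num)).1
    · intro t' ht'
      have : t' = t₀ := le_antisymm ht'.2 (h0 ▸ ht'.1)
      rw [this]
      exact (hβD 1 (by norm_num)).2
  -- main case 0 < t₀
  have hsub : Icc (0:ℝ) t₀ ⊆ Icc 0 1 := Icc_subset_Icc le_rfl ht₀1
  -- continuity of (u, s) ↦ f s u on Icc 0 t₀ ×ˢ Icc 0 1
  have hfswap : ContinuousOn (fun p : ℝ × ℝ => f p.2 p.1) (Icc 0 t₀ ×ˢ Icc 0 1) := by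
    have : MapsTo (fun p : ℝ × ℝ => (p.2, p.1)) (Icc 0 t₀ ×ˢ Icc 0 1)
        (Icc 0 1 ×ˢ Icc 0 1) := by
      rintro ⟨u, s⟩ ⟨hu, hs⟩
      exact ⟨hs, hsub hu⟩
    exact hf.comp (Continuous.continuousOn (by fun_prop)) this
  -- ε₁ : uniform gap between γ and the sensor at equal times
  obtain ⟨ε₁, hε₁pos, hε₁⟩ : ∃ ε > 0, ∀ p ∈ Icc (0:ℝ) t₀ ×ˢ Icc (0:ℝ) 1,
      ε ≤ dist (γ p.1) (f p.2 p.1) := by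
    apply stmt9_pos_min (isCompact_Icc.prod isCompact_Icc)
      ⟨(0, 0), by constructor <;> constructor <;> norm_num; exact ht₀0⟩
    · exact continuous_dist.comp_continuousOn
        ((hγ.comp continuousOn_fst fun p hp => hp.1).prodMk hfswap)
    · rintro ⟨u, s⟩ ⟨hu, hs⟩
      rw [dist_pos]
      intro hEq
      exact hev u hu ⟨s, hs, hEq.symm⟩
  -- ε₂ : uniform gap between β and the sensor at time t₀
  obtain ⟨ε₂, hε₂pos, hε₂⟩ : ∃ ε > 0, ∀ p ∈ Icc (0:ℝ) 1 ×ˢ Icc (0:ℝ) 1,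
      ε ≤ dist (β p.1) (f p.2 t₀) := by
    apply stmt9_pos_min (isCompact_Icc.prod isCompact_Icc)
      ⟨(0, 0), by constructor <;> constructor <;> norm_num⟩
    · refine continuous_dist.comp_continuousOn
        ((hβ.comp continuousOn_fst fun p hp => hp.1).prodMk ?_)
      have : MapsTo (fun p : ℝ × ℝ => (p.2, t₀)) (Icc (0:ℝ) 1 ×ˢ Icc (0:ℝ) 1)
          (Icc 0 1 ×ˢ Icc 0 1) := by
        rintro ⟨r, s⟩ ⟨hr, hs⟩
        exact ⟨hs, ht₀0, ht₀1⟩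
      exact hf.comp (Continuous.continuousOn (by fun_prop)) this
    · rintro ⟨r, s⟩ ⟨hr, hs⟩
      rw [dist_pos]
      intro hEq
      exact (hβD r hr).2 ⟨s, hs, hEq.symm⟩
  set ε := min ε₁ ε₂ with hε
  have hεpos : 0 < ε := lt_min hε₁pos hε₂pos
  -- uniform continuity of f on the square
  obtain ⟨δ, hδpos, hδ⟩ : ∃ δ > 0, ∀ p ∈ Icc (0:ℝ) 1 ×ˢ Icc (0:ℝ) 1,
      ∀ q ∈ Icc (0:ℝ) 1 ×ˢ Icc (0:ℝ) 1, dist p q < δ →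
        dist (f p.1 p.2) (f q.1 q.2) < ε := by
    have huc := ((isCompact_Icc.prod isCompact_Icc).uniformContinuousOn_of_continuous hf)
    rw [Metric.uniformContinuousOn_iff] at huc
    obtain ⟨δ, hδpos, hδ⟩ := huc ε hεpos
    exact ⟨δ, hδpos, fun p hp q hq h => hδ p hp q hq h⟩
  -- key estimate: f s t' is far from γ u when u, t' are δ-close times in range,
  -- and far from β r when t' is δ-close to t₀
  have key₁ : ∀ u ∈ Icc (0:ℝ) t₀, ∀ t' ∈ Icc (0:ℝ) t₀, |u - t'| < δ →
      ∀ s ∈ Icc (0:ℝ) 1, γ u ≠ f s t' := by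
    intro u hu t' ht' hclose s hs hEq
    have h1 : ε₁ ≤ dist (γ u) (f s u) := hε₁ (u, s) ⟨hu, hs⟩
    have hεle : ε ≤ ε₁ := min_le_left _ _
    have h2 : dist (f s u) (f s t') < ε := by
      apply hδ (s, u) ⟨hs, hsub hu⟩ (s, t') ⟨hs, hsub ht'⟩
      rw [Prod.dist_eq]
      simp only [dist_self, Real.dist_eq]
      exact max_lt hδpos hclose
    have h3 : dist (γ u) (f s u) ≤ dist (f s u) (f s t') := by
      calc dist (γ u) (f s u) ≤ dist (γ u) (f s t') + dist (f s t') (f s u) :=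
            dist_triangle _ _ _
        _ = dist (f s u) (f s t') := by rw [hEq, dist_self, zero_add, dist_comm]
    linarith
  have key₂ : ∀ r ∈ Icc (0:ℝ) 1, ∀ t' ∈ Icc (0:ℝ) t₀, |t₀ - t'| < δ →
      ∀ s ∈ Icc (0:ℝ) 1, β r ≠ f s t' := by
    intro r hr t' ht' hclose s hs hEq
    have h1 : ε₂ ≤ dist (β r) (f s t₀) := hε₂ (r, s) ⟨hr, hs⟩
    have h2 : dist (f s t₀) (f s t') < ε := by
      apply hδ (s, t₀) ⟨hs, ht₀0, ht₀1⟩ (s, t') ⟨hs, hsub ht'⟩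
      rw [Prod.dist_eq]
      simp only [dist_self, Real.dist_eq]
      exact max_lt hδpos hclose
    have hεle : ε ≤ ε₂ := min_le_right _ _
    have h3 : dist (β r) (f s t₀) ≤ dist (f s t₀) (f s t') := by
      calc dist (β r) (f s t₀) ≤ dist (β r) (f s t') + dist (f s t') (f s t₀) :=
            dist_triangle _ _ _
        _ = dist (f s t₀) (f s t') := by rw [hEq, dist_self, zero_add, dist_comm]
    linarith
  -- set up the time parameters
  set d := min (δ / 2) t₀ with hd
  have hdpos : 0 < d := lt_min (by linarith) h0
  have hdt₀ : d ≤ t₀ := min_le_right _ _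
  have hdδ : d < δ := lt_of_le_of_lt (min_le_left _ _) (by linarith)
  set a := t₀ - d with ha
  set m := t₀ - d / 2 with hm
  have ham : a ≤ m := by simp only [ha, hm]; linarith
  have ha0 : 0 ≤ a := by simp only [ha]; linarith
  have hat₀ : a ≤ t₀ := by simp only [ha]; linarith
  have hmt₀ : m < t₀ := by simp only [hm]; linarith
  -- reparametrizations (clamped to stay in range)
  set u₁ : ℝ → ℝ := fun t' => max 0 (min t₀ (a + 2 * (t' - a))) with hu₁
  set r₁ : ℝ → ℝ := fun t' => min 1 (max 0 ((t' - m) * (2 / d))) with hr₁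
  have hu₁mem : ∀ t', u₁ t' ∈ Icc 0 t₀ := fun t' =>
    ⟨le_max_left _ _, max_le ht₀0 (min_le_left _ _)⟩
  have hr₁mem : ∀ t', r₁ t' ∈ Icc (0:ℝ) 1 := fun t' =>
    ⟨le_min zero_le_one (le_max_left _ _), min_le_left _ _⟩
  -- the glued path
  set γ' : ℝ → ℂ := fun t' =>
    if t' ≤ a then γ t' else if t' ≤ m then γ (u₁ t') else β (r₁ t') with hγ'
  -- value computations at junctions
  have hu₁a : u₁ a = a := by
    simp only [hu₁]
    rw [show a + 2 * (a - a) = a by ring]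
    rw [min_eq_right hat₀, max_eq_right ha0]
  have hu₁m : u₁ m = t₀ := by
    simp only [hu₁]
    rw [show a + 2 * (m - a) = t₀ by simp only [ha, hm]; ring]
    rw [min_self, max_eq_right ht₀0]
  have hr₁m : r₁ m = 0 := by
    simp only [hr₁]
    rw [show (m - m) * (2 / d) = 0 by ring]
    rw [max_self, min_eq_right zero_le_one]
  have hr₁t₀ : r₁ t₀ = 1 := by
    simp only [hr₁]
    rw [show (t₀ - m) * (2 / d) = 1 by
      simp only [hm]; field_simp; ring]
    rw [max_eq_right zero_le_one, min_self]
  refine ⟨γ', ?_, ?_, ?_, ?_⟩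
  · -- continuity
    have hc₂ : ContinuousOn (fun t' => γ (u₁ t')) (Icc 0 t₀) :=
      hγ.comp (Continuous.continuousOn (by fun_prop)) fun t' _ => hu₁mem t'
    have hc₃ : ContinuousOn (fun t' => β (r₁ t')) (Icc 0 t₀) :=
      hβ.comp (Continuous.continuousOn (by fun_prop)) fun t' _ => hr₁mem t'
    apply stmt9_if_le hγ
    · apply stmt9_if_le hc₂ hc₃
      rw [hu₁m, hr₁m, hβ0]
    · rw [if_pos ham, hu₁a]
  · -- membership in D
    intro t' ht'
    simp only [hγ']
    split_ifs with h1 h2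
    · exact hγD t' ht'
    · exact hγD _ (hu₁mem t')
    · exact (hβD _ (hr₁mem t')).1
  · -- endpoint
    simp only [hγ']
    rw [if_neg (by linarith), if_neg (by linarith), hr₁t₀]
  · -- evasion
    intro t' ht'
    simp only [hγ']
    split_ifs with h1 h2
    · exact hev t' ht'
    · -- middle piece: γ (u₁ t'), with t' ∈ (a, m]
      rintro ⟨s, hs, hEq⟩
      push_neg at h1
      have hu' := hu₁mem t'
      have hclose : |u₁ t' - t'| < δ := by
        have h₁ : a ≤ u₁ t' := by
          simp only [hu₁]
          apply le_max_of_le_right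
          exact le_min hat₀ (by linarith)
        have h₂ : u₁ t' ≤ t₀ := (hu₁mem t').2
        rw [abs_lt]
        constructor <;> [linarith [ht'.2]; linarith [h1, ha]]
      exact key₁ (u₁ t') hu' t' ht' hclose s hs hEq.symm
    · -- last piece: β (r₁ t'), with t' ∈ (m, t₀]
      rintro ⟨s, hs, hEq⟩
      push_neg at h1 h2
      have hclose : |t₀ - t'| < δ := by
        rw [abs_lt]
        constructor <;> [linarith [ht'.2]; linarith [h2, hm]]
      exact key₂ (r₁ t') (hr₁mem t') t' ht' hclose s hs hEq.symm
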